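/- Let V₁, …, V_l and V'₁, …, V'_{l'} be subspaces of a finite-dimensional complex inner product space E, each sequence satisfying the non-intersection condition (V_{j+1} ∩ V_j⊥ = {0} and V'_{j+1} ∩ V'_j⊥ = {0} for all applicable j), with all subspaces nonzero and proper. If T_{V_l}(z) ∘ ⋯ ∘ T_{V_1}(z) = T_{V'_{l'}}(z) ∘ ⋯ ∘ T_{V'_1}(z) for all z ∈ ℂ, then l = l' and V_j = V'_j for all j (uniqueness of the internal-structure factorization). -/

import Mathlib

noncomputable def projL {E : Type*} [NormedAddCommGroup E] [InnerProductSpace ℂ E]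
    [FiniteDimensional ℂ E] (V : Submodule ℂ E) : E →ₗ[ℂ] E :=
  V.subtype ∘ₗ (V.orthogonalProjectionOnto).toLinearMap

noncomputable def TV {E : Type*} [NormedAddCommGroup E] [InnerProductSpace ℂ E]
    [FiniteDimensional ℂ E] (V : Submodule ℂ E) (z : ℂ) : E →ₗ[ℂ] E :=
  z • projL V + projL Vᗮ

variable {E : Type*} [NormedAddCommGroup E] [InnerProductSpace ℂ E] [FiniteDimensional ℂ E]

lemma projL_apply (U : Submodule ℂ E) (x : E) :
    projL U x = (U.orthogonalProjectionOnto x : E) := rfl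

lemma projL_mem (U : Submodule ℂ E) (x : E) : projL U x ∈ U :=
  (U.orthogonalProjectionOnto x).2

lemma projL_eq_self {U : Submodule ℂ E} {x : E} (hx : x ∈ U) : projL U x = x := by
  rw [projL_apply]; exact Submodule.starProjection_eq_self_iff.2 hx

lemma projL_eq_zero {U : Submodule ℂ E} {x : E} (hx : x ∈ Uᗮ) : projL U x = 0 := by
  rw [projL_apply, Submodule.orthogonalProjectionOnto_apply_of_mem_orthogonal hx,
    Submodule.coe_zero]

lemma projL_projL (U : Submodule ℂ E) (x : E) : projL U (projL U x) = projL U x :=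
  projL_eq_self (projL_mem U x)

lemma projL_orth_projL (U : Submodule ℂ E) (x : E) : projL Uᗮ (projL U x) = 0 :=
  projL_eq_zero (Submodule.le_orthogonal_orthogonal U (projL_mem U x))

lemma projL_projL_orth (U : Submodule ℂ E) (x : E) : projL U (projL Uᗮ x) = 0 :=
  projL_eq_zero (projL_mem Uᗮ x)

lemma projL_add_projL_orth (U : Submodule ℂ E) (x : E) : projL U x + projL Uᗮ x = x :=
  U.starProjection_add_starProjection_orthogonal x

lemma ker_projL (U : Submodule ℂ E) : LinearMap.ker (projL U) = Uᗮ := by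
  ext x
  simp only [LinearMap.mem_ker, projL_apply, Submodule.coe_eq_zero]
  exact Submodule.orthogonalProjectionOnto_eq_zero_iff

lemma TV_zero (U : Submodule ℂ E) : TV U 0 = projL Uᗮ := by
  simp [TV]

lemma ker_TV_zero (U : Submodule ℂ E) : LinearMap.ker (TV U 0) = U := by
  rw [TV_zero, ker_projL, Submodule.orthogonal_orthogonal]

lemma TV_apply (U : Submodule ℂ E) (z : ℂ) (x : E) :
    TV U z x = z • projL U x + projL Uᗮ x := by
  simp [TV]

lemma TV_mul (U : Submodule ℂ E) (z w : ℂ) :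
    (TV U z : Module.End ℂ E) * TV U w = TV U (z * w) := by
  ext x
  simp only [Module.End.mul_apply, TV_apply, map_add, map_smul, projL_projL,
    projL_orth_projL, projL_projL_orth, smul_zero, add_zero, zero_add, smul_smul, mul_comm]

lemma TV_one (U : Submodule ℂ E) : (TV U 1 : Module.End ℂ E) = 1 := by
  ext x
  simp [TV_apply, projL_add_projL_orth]

lemma isUnit_TV (U : Submodule ℂ E) {z : ℂ} (hz : z ≠ 0) :
    IsUnit (TV U z : Module.End ℂ E) := by
  refine ⟨⟨TV U z, TV U z⁻¹, ?_, ?_⟩, rfl⟩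
  · rw [TV_mul, mul_inv_cancel₀ hz, TV_one]
  · rw [TV_mul, inv_mul_cancel₀ hz, TV_one]

noncomputable def PT (L : List (Submodule ℂ E)) (z : ℂ) : Module.End ℂ E :=
  ((L.map fun U => (TV U z : Module.End ℂ E)).reverse).prod

lemma PT_nil (z : ℂ) : PT ([] : List (Submodule ℂ E)) z = 1 := rfl

lemma PT_cons (U : Submodule ℂ E) (T : List (Submodule ℂ E)) (z : ℂ) :
    PT (U :: T) z = PT T z * TV U z := by
  simp [PT]

lemma PT_concat (T : List (Submodule ℂ E)) (W : Submodule ℂ E) (z : ℂ) :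
    PT (T ++ [W]) z = (TV W z : Module.End ℂ E) * PT T z := by
  simp [PT]

lemma ker_PT_zero : ∀ (T : List (Submodule ℂ E)) (U : Submodule ℂ E),
    List.Chain' (fun (A B : Submodule ℂ E) => B ⊓ Aᗮ = ⊥) (U :: T) →
    LinearMap.ker (PT (U :: T) 0) = U := by
  intro T
  induction T with
  | nil =>
    intro U _
    rw [PT_cons, PT_nil, one_mul, ker_TV_zero]
  | cons W R ih =>
    intro U hc
    have hWU : W ⊓ Uᗮ = ⊥ := (List.isChain_cons_cons.1 hc).1
    have hker : LinearMap.ker (PT (W :: R) 0) = W := ih W (List.isChain_cons_cons.1 hc).2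
    ext x
    simp only [PT_cons (U := U), LinearMap.mem_ker, Module.End.mul_apply]
    constructor
    · intro hx
      have h1 : TV U 0 x ∈ W := by
        rw [← hker]
        simpa [PT_cons] using hx
      have h2 : TV U 0 x ∈ Uᗮ := by
        rw [TV_zero]
        exact projL_mem Uᗮ x
      have : TV U 0 x = 0 := by
        have := Submodule.mem_inf.2 ⟨h1, h2⟩
        rwa [hWU, Submodule.mem_bot] at this
      have : x ∈ LinearMap.ker (TV U 0) := this
      rwa [ker_TV_zero] at this
    · intro hx
      have : TV U 0 x = 0 := by
        have : x ∈ LinearMap.ker (TV U 0) := by rwa [ker_TV_zero]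
        exact this
      rw [this, map_zero]

lemma continuous_PT (L : List (Submodule ℂ E)) (x : E) :
    Continuous fun z : ℂ => PT L z x := by
  induction L using List.reverseRecOn with
  | nil => simpa [PT_nil] using continuous_const
  | append_singleton T W ih =>
    have h1 : Continuous (projL W : E →ₗ[ℂ] E) := LinearMap.continuous_of_finiteDimensional _
    have h2 : Continuous (projL Wᗮ : E →ₗ[ℂ] E) := LinearMap.continuous_of_finiteDimensional _
    have hrw : (fun z : ℂ => PT (T ++ [W]) z x)
        = fun z => z • projL W (PT T z x) + projL Wᗮ (PT T z x) := by
      funext z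
      rw [PT_concat, Module.End.mul_apply, TV_apply]
    rw [hrw]
    exact (continuous_id.smul (h1.comp ih)).add (h2.comp ih)

lemma PT_eq_of_ne_zero {L L' : List (Submodule ℂ E)}
    (h : ∀ z : ℂ, z ≠ 0 → PT L z = PT L' z) : ∀ z, PT L z = PT L' z := by
  intro z
  ext x
  have hd : Dense ({(0 : ℂ)}ᶜ : Set ℂ) := dense_compl_singleton 0
  have hext : (fun w : ℂ => PT L w x) = fun w => PT L' w x :=
    Continuous.ext_on hd (continuous_PT L x) (continuous_PT L' x)
      (fun w hw => by rw [h w hw])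
  exact congrFun hext z

lemma core : ∀ (L L' : List (Submodule ℂ E)), L ≠ [] → L' ≠ [] →
    (∀ U ∈ L, U ≠ ⊥) → (∀ U ∈ L', U ≠ ⊥) →
    List.Chain' (fun (A B : Submodule ℂ E) => B ⊓ Aᗮ = ⊥) L → List.Chain' (fun (A B : Submodule ℂ E) => B ⊓ Aᗮ = ⊥) L' →
    (∀ z, PT L z = PT L' z) → L = L' := by
  intro L
  induction L with
  | nil => intro L' h; exact absurd rfl h
  | cons U T ih =>
    intro L' _ hL'ne hnz hnz' hc hc' heq
    obtain ⟨U', T', rfl⟩ : ∃ U' T', L' = U' :: T' := by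
      cases L' with
      | nil => exact absurd rfl hL'ne
      | cons a b => exact ⟨a, b, rfl⟩
    have hU : U = U' := by
      rw [← ker_PT_zero T U hc, ← ker_PT_zero T' U' hc', heq 0]
    subst hU
    have htail : ∀ z, PT T z = PT T' z := by
      apply PT_eq_of_ne_zero
      intro z hz
      have hu := isUnit_TV U hz
      have h := heq z
      rw [PT_cons, PT_cons] at h
      exact hu.mul_right_cancel h
    cases T with
    | nil =>
      cases T' with
      | nil => rfl
      | cons W' R' =>
        exfalso
        have hk : LinearMap.ker (PT (W' :: R') 0) = W' :=
          ker_PT_zero R' W' (List.isChain_cons_cons.1 hc').2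
        have h1 : PT (W' :: R') 0 = 1 := by rw [← htail 0, PT_nil]
        rw [h1] at hk
        have : W' = ⊥ := by
          rw [← hk, Module.End.one_eq_id, LinearMap.ker_id]
        exact hnz' W' (by simp) this
    | cons W R =>
      cases T' with
      | nil =>
        exfalso
        have hk : LinearMap.ker (PT (W :: R) 0) = W :=
          ker_PT_zero R W (List.isChain_cons_cons.1 hc).2
        have h1 : PT (W :: R) 0 = 1 := by rw [htail 0, PT_nil]
        rw [h1] at hk
        have : W = ⊥ := by
          rw [← hk, Module.End.one_eq_id, LinearMap.ker_id]
        exact hnz W (by simp) this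
      | cons W' R' =>
        have := ih (W' :: R') (by simp) (by simp)
          (fun A hA => hnz A (List.mem_cons_of_mem _ hA))
          (fun A hA => hnz' A (List.mem_cons_of_mem _ hA))
          (List.isChain_cons_cons.1 hc).2 (List.isChain_cons_cons.1 hc').2 htail
        rw [this]

lemma chain'_ofFn {n : ℕ} (V : Fin (n + 1) → Submodule ℂ E)
    (h : ∀ j : Fin n, V j.succ ⊓ (V j.castSucc)ᗮ = ⊥) :
    List.Chain' (fun (A B : Submodule ℂ E) => B ⊓ Aᗮ = ⊥) (List.ofFn V) := by
  unfold List.Chain'; rw [List.isChain_iff_getElem]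
  intro i hi
  simp only [List.length_ofFn] at hi
  have hi' : i < n := by omega
  have := h ⟨i, hi'⟩
  simp only [List.getElem_ofFn]
  convert this using 3 <;> rfl

theorem factorization_unique (l l' : ℕ)
    (V : Fin (l + 1) → Submodule ℂ E) (V' : Fin (l' + 1) → Submodule ℂ E)
    (hVnz : ∀ j, V j ≠ ⊥) (hVnt : ∀ j, V j ≠ ⊤)
    (hV'nz : ∀ j, V' j ≠ ⊥) (hV'nt : ∀ j, V' j ≠ ⊤)
    (hV : ∀ j : Fin l, V j.succ ⊓ (V j.castSucc)ᗮ = ⊥)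
    (hV' : ∀ j : Fin l', V' j.succ ⊓ (V' j.castSucc)ᗮ = ⊥)
    (heq : ∀ z : ℂ,
      (List.ofFn fun j : Fin (l + 1) => (TV (V j) z : Module.End ℂ E)).reverse.prod =
      (List.ofFn fun j : Fin (l' + 1) => (TV (V' j) z : Module.End ℂ E)).reverse.prod) :
    ∃ h : l = l', ∀ j : Fin (l + 1), V j = V' (Fin.cast (by rw [h]) j) := by
  have hPT : ∀ z : ℂ, PT (List.ofFn V) z = PT (List.ofFn V') z := by
    intro z
    simpa [PT, List.map_ofFn, Function.comp_def] using heq z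
  have hlist : List.ofFn V = List.ofFn V' :=
    core (List.ofFn V) (List.ofFn V') (by simp) (by simp)
      (by intro A hA; obtain ⟨j, rfl⟩ := List.mem_ofFn.1 hA; exact hVnz j)
      (by intro A hA; obtain ⟨j, rfl⟩ := List.mem_ofFn.1 hA; exact hV'nz j)
      (chain'_ofFn V hV) (chain'_ofFn V' hV') hPT
  have hlen : l + 1 = l' + 1 := by
    have := congrArg List.length hlist
    simpa using this
  have h : l = l' := Nat.succ_injective hlen
  refine ⟨h, ?_⟩
  subst h
  have hVV' : V = V' := List.ofFn_injective hlist
  intro j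
  rw [hVV']
  rfl
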